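/- Suppose the problems are dissipative with respect to a Π-periodic admissible trajectory (ȳ(·), ū(·)) with Π-periodic storage function S(t,y) bounded in absolute value by M: S(τ₀, y(τ₀)) + ∫_{τ₀}^{τ₁} (f⁰(t,y(t),u(t)) - f⁰(t,ȳ(t),ū(t))) dt ≥ S(τ₁, y(τ₁)) for all admissible pairs and τ₀ < τ₁. Let J̄_per = (1/Π)∫₀^Π f⁰(t,ȳ(t),ū(t)) dt. Then for every admissible pair (y,u) on [t₀, t₀ + kΠ], J̄_per ≤ (1/(kΠ))∫_{t₀}^{t₀+kΠ} f⁰(t,y(t),u(t)) dt + 2M/(kΠ); consequently J̄_per ≤ J̄_{[t₀,+∞)}, and since (ȳ,ū) is itself admissible, J̄_{[t₀,+∞)} = J̄_per. -/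

import Mathlib

set_option maxHeartbeats 1000000


open MeasureTheory Set Filter

/-- A real-valued function periodic with period `T > 0` that is interval integrable on `[0, T]`
is interval integrable on every interval. -/
lemma aux_periodic_intervalIntegrable {f : ℝ → ℝ} {T : ℝ} (hT : 0 < T)
    (hf : Function.Periodic f T)
    (h : IntervalIntegrable f MeasureTheory.volume 0 T) :
    ∀ a b : ℝ, IntervalIntegrable f MeasureTheory.volume a b := by
  have hblock : ∀ n : ℤ, IntervalIntegrable f MeasureTheory.volume ((n : ℝ) * T)
      ((n : ℝ) * T + T) := by
    intro n
    have h2 := h.comp_sub_right ((n : ℝ) * T)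
    have heq : (fun x => f (x - (n : ℝ) * T)) = f := funext fun x => hf.sub_int_mul_eq n
    rw [heq] at h2
    simpa [add_comm] using h2
  have hchain : ∀ m : ℤ, ∀ j : ℕ, IntervalIntegrable f MeasureTheory.volume ((m : ℝ) * T)
      (((m + j : ℤ) : ℝ) * T) := by
    intro m j
    induction j with
    | zero => simp
    | succ j ih =>
      have heq : ((m + ((j + 1 : ℕ) : ℤ) : ℤ) : ℝ) * T = ((m + j : ℤ) : ℝ) * T + T := by
        push_cast; ring
      rw [heq]
      exact ih.trans (hblock (m + j))
  intro a b
  set lo := min a b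
  set hi := max a b
  set m : ℤ := ⌊lo / T⌋
  set j : ℕ := ⌈(hi - (m : ℝ) * T) / T⌉.toNat
  have hm : (m : ℝ) * T ≤ lo := by
    have := Int.floor_le (lo / T)
    calc (m : ℝ) * T ≤ (lo / T) * T := by
          exact mul_le_mul_of_nonneg_right this hT.le
      _ = lo := by field_simp
  have hj : hi ≤ ((m + j : ℤ) : ℝ) * T := by
    have h1 : (hi - (m : ℝ) * T) / T ≤ (⌈(hi - (m : ℝ) * T) / T⌉ : ℝ) := Int.le_ceil _
    have h2 : (⌈(hi - (m : ℝ) * T) / T⌉ : ℤ) ≤ (j : ℤ) := Int.self_le_toNat _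
    have h3 : (hi - (m : ℝ) * T) / T ≤ (j : ℝ) := by
      calc (hi - (m : ℝ) * T) / T ≤ (⌈(hi - (m : ℝ) * T) / T⌉ : ℝ) := h1
        _ ≤ (j : ℝ) := by exact_mod_cast h2
    have h4 : hi - (m : ℝ) * T ≤ (j : ℝ) * T := by
      calc hi - (m : ℝ) * T = ((hi - (m : ℝ) * T) / T) * T := by field_simp
        _ ≤ (j : ℝ) * T := mul_le_mul_of_nonneg_right h3 hT.le
    push_cast
    linarith
  refine (hchain m j).mono_set ?_
  have hmem1 : a ∈ Set.uIcc ((m : ℝ) * T) (((m + j : ℤ) : ℝ) * T) := by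
    rw [Set.uIcc_of_le (by linarith [min_le_max (a := a) (b := b)])]
    exact ⟨le_trans hm (min_le_left a b), le_trans (le_max_left a b) hj⟩
  have hmem2 : b ∈ Set.uIcc ((m : ℝ) * T) (((m + j : ℤ) : ℝ) * T) := by
    rw [Set.uIcc_of_le (by linarith [min_le_max (a := a) (b := b)])]
    exact ⟨le_trans hm (min_le_right a b), le_trans (le_max_right a b) hj⟩
  exact Set.uIcc_subset_uIcc hmem1 hmem2

/-- Dissipativity with respect to a Π-periodic trajectory identifies the limit value:
`J̄_per ≤ (1/(kΠ)) ∫_{t₀}^{t₀+kΠ} f⁰(t,y,u) dt + 2M/(kΠ)` for all admissible pairs, hence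
`J̄_per ≤ J̄_{[t₀,∞)}`, and admissibility of the periodic trajectory gives equality. -/
theorem stmt_14
    {X U : Type*}
    (f0 : ℝ → X → U → ℝ)
    (Adm : ℝ → ℝ → Set ((ℝ → X) × (ℝ → U)))  -- admissible pairs on [a,b]
    (Per : ℝ) (hPer : 0 < Per)
    (ybar : ℝ → X) (ubar : ℝ → U)
    -- the periodic trajectory is admissible on every interval
    (hadm_per : ∀ a b : ℝ, a < b → (ybar, ubar) ∈ Adm a b)
    -- the running cost along the periodic trajectory is Π-periodic and integrable
    (hper : Function.Periodic (fun t => f0 t (ybar t) (ubar t)) Per)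
    (hintper : IntegrableOn (fun t => f0 t (ybar t) (ubar t)) (Icc 0 Per))
    (hintg : ∀ a b : ℝ, a < b → ∀ p ∈ Adm a b,
      IntegrableOn (fun t => f0 t (p.1 t) (p.2 t)) (Icc a b))
    (Jper : ℝ) (hJper : Jper = (1 / Per) * ∫ t in (0:ℝ)..Per, f0 t (ybar t) (ubar t))
    (S : ℝ → X → ℝ) (M : ℝ) (hM : 0 < M)
    (hSbound : ∀ t : ℝ, ∀ y : X, |S t y| ≤ M)
    (hSper : ∀ t : ℝ, ∀ y : X, S (t + Per) y = S t y)
    -- dissipation inequality with respect to the periodic trajectory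
    (hdiss : ∀ a b : ℝ, a < b → ∀ p ∈ Adm a b, ∀ τ₀ τ₁ : ℝ,
      a ≤ τ₀ → τ₀ < τ₁ → τ₁ ≤ b →
      S τ₀ (p.1 τ₀) +
          ∫ t in τ₀..τ₁, (f0 t (p.1 t) (p.2 t) - f0 t (ybar t) (ubar t)) ≥
        S τ₁ (p.1 τ₁))
    (t₀ : ℝ)
    (Jbar : ℝ → ℝ) (Jinf : ℝ)
    -- J̄_{[t₀,t₁]} is the infimum of the time-averaged cost over admissible pairs
    (hJbar : ∀ t₁ > t₀, IsGLB
      {v : ℝ | ∃ p ∈ Adm t₀ t₁,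
        v = (1 / (t₁ - t₀)) * ∫ t in t₀..t₁, f0 t (p.1 t) (p.2 t)} (Jbar t₁))
    (hJlim : Tendsto Jbar atTop (nhds Jinf)) :
    (∀ k : ℕ, 0 < k → ∀ p ∈ Adm t₀ (t₀ + k * Per),
      Jper ≤ (1 / (k * Per)) * (∫ t in t₀..(t₀ + k * Per), f0 t (p.1 t) (p.2 t))
        + 2 * M / (k * Per)) ∧
    Jper ≤ Jinf ∧ Jinf = Jper := by
  set g : ℝ → ℝ := fun t => f0 t (ybar t) (ubar t) with hg
  have hgI : ∀ a b : ℝ, IntervalIntegrable g MeasureTheory.volume a b := by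
    refine aux_periodic_intervalIntegrable hPer hper ?_
    rw [intervalIntegrable_iff_integrableOn_Icc_of_le hPer.le]
    exact hintper
  set c : ℝ := ∫ t in (0:ℝ)..Per, g t with hc
  have hkint : ∀ k : ℕ, (∫ t in t₀..(t₀ + (k : ℝ) * Per), g t) = (k : ℝ) * c := by
    intro k
    have h1 := hper.intervalIntegral_add_zsmul_eq (k : ℤ) t₀ hgI
    have h2 := hper.intervalIntegral_add_eq t₀ 0
    rw [h2, zero_add] at h1
    have heq : t₀ + ((k : ℤ) • Per) = t₀ + (k : ℝ) * Per := by
      rw [zsmul_eq_mul]; push_cast; ring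
    rw [heq] at h1
    rw [h1, zsmul_eq_mul]
    push_cast; ring
  have key : ∀ k : ℕ, 0 < k → ∀ p ∈ Adm t₀ (t₀ + k * Per),
      Jper ≤ (1 / (k * Per)) * (∫ t in t₀..(t₀ + k * Per), f0 t (p.1 t) (p.2 t))
        + 2 * M / (k * Per) := by
    intro k hk p hp
    have hkR : (0:ℝ) < (k : ℝ) := by exact_mod_cast hk
    have hkP : (0:ℝ) < (k : ℝ) * Per := mul_pos hkR hPer
    have hab : t₀ < t₀ + (k : ℝ) * Per := by linarith
    have hfI : IntervalIntegrable (fun t => f0 t (p.1 t) (p.2 t)) MeasureTheory.volume t₀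
        (t₀ + (k : ℝ) * Per) := by
      rw [intervalIntegrable_iff_integrableOn_Icc_of_le hab.le]
      exact hintg _ _ hab p hp
    have hd := hdiss t₀ (t₀ + (k : ℝ) * Per) hab p hp t₀ (t₀ + (k : ℝ) * Per)
      le_rfl hab le_rfl
    rw [intervalIntegral.integral_sub hfI (hgI t₀ _)] at hd
    have h1 := abs_le.1 (hSbound t₀ (p.1 t₀))
    have h2 := abs_le.1 (hSbound (t₀ + (k : ℝ) * Per) (p.1 (t₀ + (k : ℝ) * Per)))
    have hIg := hkint k
    have hJ : Jper * Per = c := by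
      rw [hJper, hc, hg]
      field_simp
    have hI : (k : ℝ) * Per * Jper - 2 * M ≤
        ∫ t in t₀..(t₀ + (k : ℝ) * Per), f0 t (p.1 t) (p.2 t) := by
      have : (∫ t in t₀..(t₀ + (k : ℝ) * Per), g t) = (k : ℝ) * c := hIg
      nlinarith [hd, this]
    have hdiv : (0:ℝ) ≤ ((∫ t in t₀..(t₀ + (k : ℝ) * Per), f0 t (p.1 t) (p.2 t))
        - ((k : ℝ) * Per * Jper - 2 * M)) / ((k : ℝ) * Per) :=
      div_nonneg (by linarith) hkP.le
    have heq : (1 / ((k : ℝ) * Per)) * (∫ t in t₀..(t₀ + (k : ℝ) * Per), f0 t (p.1 t) (p.2 t))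
        + 2 * M / ((k : ℝ) * Per) - Jper
        = ((∫ t in t₀..(t₀ + (k : ℝ) * Per), f0 t (p.1 t) (p.2 t))
          - ((k : ℝ) * Per * Jper - 2 * M)) / ((k : ℝ) * Per) := by
      field_simp
      ring
    linarith [heq ▸ hdiv]
  refine ⟨key, ?_, ?_⟩
  · -- Jper ≤ Jinf
    have hlb : ∀ k : ℕ, 0 < k → Jper - 2 * M / ((k : ℝ) * Per) ≤ Jbar (t₀ + (k : ℝ) * Per) := by
      intro k hk
      have hkR : (0:ℝ) < (k : ℝ) := by exact_mod_cast hk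
      have hkP : (0:ℝ) < (k : ℝ) * Per := mul_pos hkR hPer
      have hab : t₀ < t₀ + (k : ℝ) * Per := by linarith
      refine (hJbar _ hab).2 ?_
      rintro v ⟨p, hp, rfl⟩
      have := key k hk p hp
      have hsub : t₀ + (k : ℝ) * Per - t₀ = (k : ℝ) * Per := by ring
      rw [hsub]
      linarith
    have hub : ∀ k : ℕ, 0 < k → Jbar (t₀ + (k : ℝ) * Per) ≤ Jper := by
      intro k hk
      have hkR : (0:ℝ) < (k : ℝ) := by exact_mod_cast hk
      have hkP : (0:ℝ) < (k : ℝ) * Per := mul_pos hkR hPer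
      have hab : t₀ < t₀ + (k : ℝ) * Per := by linarith
      refine (hJbar _ hab).1 ⟨(ybar, ubar), hadm_per _ _ hab, ?_⟩
      have hIg := hkint k
      have hsub : t₀ + (k : ℝ) * Per - t₀ = (k : ℝ) * Per := by ring
      rw [hsub]
      show Jper = (1 / ((k : ℝ) * Per)) * ∫ t in t₀..(t₀ + (k : ℝ) * Per), g t
      rw [hIg, hJper]
      field_simp
    have hatTop : Tendsto (fun k : ℕ => t₀ + (k : ℝ) * Per) atTop atTop :=
      tendsto_atTop_add_const_left _ t₀
        (tendsto_natCast_atTop_atTop.atTop_mul_const hPer)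
    have htend : Tendsto (fun k : ℕ => Jbar (t₀ + (k : ℝ) * Per)) atTop (nhds Jinf) :=
      hJlim.comp hatTop
    have hzero : Tendsto (fun k : ℕ => 2 * M / ((k : ℝ) * Per)) atTop (nhds 0) :=
      Tendsto.div_atTop tendsto_const_nhds
        (tendsto_natCast_atTop_atTop.atTop_mul_const hPer)
    have hconst : Tendsto (fun k : ℕ => Jper - 2 * M / ((k : ℝ) * Per)) atTop
        (nhds (Jper - 0)) := tendsto_const_nhds.sub hzero
    have := le_of_tendsto_of_tendsto hconst htend ?_
    · simpa using this
    · filter_upwards [eventually_ge_atTop 1] with k hk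
      exact hlb k hk
  · -- Jinf = Jper
    have hub : ∀ k : ℕ, 0 < k → Jbar (t₀ + (k : ℝ) * Per) ≤ Jper := by
      intro k hk
      have hkR : (0:ℝ) < (k : ℝ) := by exact_mod_cast hk
      have hkP : (0:ℝ) < (k : ℝ) * Per := mul_pos hkR hPer
      have hab : t₀ < t₀ + (k : ℝ) * Per := by linarith
      refine (hJbar _ hab).1 ⟨(ybar, ubar), hadm_per _ _ hab, ?_⟩
      have hIg := hkint k
      have hsub : t₀ + (k : ℝ) * Per - t₀ = (k : ℝ) * Per := by ring
      rw [hsub]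
      show Jper = (1 / ((k : ℝ) * Per)) * ∫ t in t₀..(t₀ + (k : ℝ) * Per), g t
      rw [hIg, hJper]
      field_simp
    have hatTop : Tendsto (fun k : ℕ => t₀ + (k : ℝ) * Per) atTop atTop :=
      tendsto_atTop_add_const_left _ t₀
        (tendsto_natCast_atTop_atTop.atTop_mul_const hPer)
    have htend : Tendsto (fun k : ℕ => Jbar (t₀ + (k : ℝ) * Per)) atTop (nhds Jinf) :=
      hJlim.comp hatTop
    have hlb : ∀ k : ℕ, 0 < k → Jper - 2 * M / ((k : ℝ) * Per) ≤ Jbar (t₀ + (k : ℝ) * Per) := by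
      intro k hk
      have hkR : (0:ℝ) < (k : ℝ) := by exact_mod_cast hk
      have hkP : (0:ℝ) < (k : ℝ) * Per := mul_pos hkR hPer
      have hab : t₀ < t₀ + (k : ℝ) * Per := by linarith
      refine (hJbar _ hab).2 ?_
      rintro v ⟨p, hp, rfl⟩
      have := key k hk p hp
      have hsub : t₀ + (k : ℝ) * Per - t₀ = (k : ℝ) * Per := by ring
      rw [hsub]
      linarith
    have hzero : Tendsto (fun k : ℕ => 2 * M / ((k : ℝ) * Per)) atTop (nhds 0) :=
      Tendsto.div_atTop tendsto_const_nhds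
        (tendsto_natCast_atTop_atTop.atTop_mul_const hPer)
    have hconst : Tendsto (fun k : ℕ => Jper - 2 * M / ((k : ℝ) * Per)) atTop
        (nhds (Jper - 0)) := tendsto_const_nhds.sub hzero
    have h1 : Jper ≤ Jinf := by
      have := le_of_tendsto_of_tendsto hconst htend ?_
      · simpa using this
      · filter_upwards [eventually_ge_atTop 1] with k hk
        exact hlb k hk
    have h2 : Jinf ≤ Jper := by
      refine le_of_tendsto htend ?_
      filter_upwards [eventually_ge_atTop 1] with k hk
      exact hub k hk
    linarith
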